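/- For every k ≥ 1, the subspace F_k is the φ-orthogonal internal direct sum of F_{k−1} and W_k: one has F_{k−1} ⊆ F_k, every x ∈ F_k can be written as x = y + z with y ∈ F_{k−1} and z ∈ W_k, and F_{k−1} ∩ W_k = {0}. -/

import Mathlib

open scoped ComplexOrder

noncomputable section

/-- The product `S_{μ₁} ⋯ S_{μ_p}` along a word `μ` (with `S_μ = 1` for the empty word). -/
def wordProd {A : Type*} [Monoid A] {n : ℕ} (S : Fin n → A) (μ : List (Fin n)) : A :=
  (μ.map S).prod

/-- `B_{r,s} = Span { S_μ S_ν⋆ : |μ| = r, |ν| = s }`;  `F_k = B_{k,k}`. -/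
def Bspan {A : Type*} [Ring A] [Algebra ℂ A] [StarRing A] {n : ℕ}
    (S : Fin n → A) (r s : ℕ) : Submodule ℂ A :=
  Submodule.span ℂ
    {a | ∃ μ ν : List (Fin n), μ.length = r ∧ ν.length = s ∧
        a = wordProd S μ * star (wordProd S ν)}

/-- `W_0 = ℂ·1` and, for `k ≥ 1`,
`W_k = {x ∈ F_k : φ(y⋆ x) = 0 for all y ∈ F_{k-1}}`. -/
def Wsub {A : Type*} [NormedRing A] [NormedAlgebra ℂ A] [StarRing A] {n : ℕ}
    (φ : A →L[ℂ] ℂ) (S : Fin n → A) : ℕ → Submodule ℂ A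
  | 0 => Submodule.span ℂ {(1 : A)}
  | (k + 1) =>
      Bspan S (k + 1) (k + 1) ⊓
        ⨅ y ∈ Bspan S k k,
          LinearMap.ker ((φ : A →ₗ[ℂ] ℂ) ∘ₗ LinearMap.mulLeft ℂ (star y))

/-- `V¹_{k,r} = Span { S_μ x : |μ| = r, x ∈ W_k }`. -/
def V1 {A : Type*} [NormedRing A] [NormedAlgebra ℂ A] [StarRing A] {n : ℕ}
    (φ : A →L[ℂ] ℂ) (S : Fin n → A) (k r : ℕ) : Submodule ℂ A :=
  Submodule.span ℂ
    {a | ∃ μ : List (Fin n), ∃ x : A, μ.length = r ∧ x ∈ Wsub φ S k ∧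
        a = wordProd S μ * x}

/-- `V²_{k,r} = Span { x S_γ⋆ : |γ| = r, x ∈ W_k }`. -/
def V2 {A : Type*} [NormedRing A] [NormedAlgebra ℂ A] [StarRing A] {n : ℕ}
    (φ : A →L[ℂ] ℂ) (S : Fin n → A) (k r : ℕ) : Submodule ℂ A :=
  Submodule.span ℂ
    {a | ∃ γ : List (Fin n), ∃ x : A, γ.length = r ∧ x ∈ Wsub φ S k ∧
        a = x * star (wordProd S γ)}

section words
variable {A : Type*} [Monoid A] {n : ℕ} (S : Fin n → A)

lemma wordProd_nil : wordProd S [] = 1 := rfl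

lemma wordProd_cons (a : Fin n) (μ : List (Fin n)) :
    wordProd S (a :: μ) = S a * wordProd S μ := by simp [wordProd]

lemma wordProd_append (μ ν : List (Fin n)) :
    wordProd S (μ ++ ν) = wordProd S μ * wordProd S ν := by simp [wordProd]

end words

lemma cuntz_orth {A : Type*} [NormedRing A] [StarRing A] [CStarRing A]
    [NormedAlgebra ℂ A] [StarModule ℂ A] [CompleteSpace A]
    {n : ℕ} (S : Fin n → A)
    (hS1 : ∀ i, star (S i) * S i = 1)
    (hS2 : ∑ j, S j * star (S j) = 1)
    (i j : Fin n) : star (S i) * S j = if i = j then 1 else 0 := by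
  split_ifs with h
  · subst h; exact hS1 i
  · letI : CStarAlgebra A := {}
    letI := CStarAlgebra.spectralOrder A
    haveI := CStarAlgebra.spectralOrderedRing A
    set q : A := S j * star (S j) with hq
    have hqsa : star q = q := by simp [hq, mul_assoc]
    have hq2 : q * q = q := by
      rw [hq]; rw [mul_assoc, ← mul_assoc (star (S j)), hS1 j, one_mul]
    have hple : S i * star (S i) ≤ 1 - q := by
      rw [← hS2]
      have h4 : (∑ l, S l * star (S l)) - q = ∑ l ∈ Finset.univ.erase j, S l * star (S l) := by
        rw [Finset.sum_erase_eq_sub (Finset.mem_univ j)]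
      rw [h4]
      have h5 : S i * star (S i) = ∑ l ∈ {i}, S l * star (S l) := by simp
      rw [h5]
      apply Finset.sum_le_sum_of_subset_of_nonneg
      · intro l hl; simp at hl; subst hl; simp [Finset.mem_erase, h]
      · intro l _ _; exact mul_star_self_nonneg (S l)
    have key : star (star (S i) * q) * (star (S i) * q) = 0 := by
      have h1 := star_right_conjugate_le_conjugate hple q
      rw [hqsa] at h1
      have h2 : q * (1 - q) * q = 0 := by
        rw [mul_one_sub, hq2, sub_self, zero_mul]
      have h3 : star (star (S i) * q) * (star (S i) * q)
          = q * (S i * star (S i)) * q := by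
        simp [hqsa, mul_assoc]
      rw [h3]
      exact le_antisymm (h2 ▸ h1) (h3 ▸ star_mul_self_nonneg _)
    have hz : star (S i) * q = 0 := by
      rwa [CStarRing.star_mul_self_eq_zero_iff] at key
    have hqS : q * S j = S j := by rw [hq, mul_assoc, hS1, mul_one]
    rw [← hqS, ← mul_assoc, hz, zero_mul]

lemma word_orth {A : Type*} [NormedRing A] [StarRing A] [CStarRing A]
    [NormedAlgebra ℂ A] [StarModule ℂ A] [CompleteSpace A]
    {n : ℕ} (S : Fin n → A)
    (hS1 : ∀ i, star (S i) * S i = 1)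
    (hS2 : ∑ j, S j * star (S j) = 1) :
    ∀ (μ ν : List (Fin n)), μ.length = ν.length →
      star (wordProd S μ) * wordProd S ν = if μ = ν then 1 else 0 := by
  intro μ
  induction μ with
  | nil =>
    intro ν hν
    rw [List.length_nil] at hν
    obtain rfl : ν = [] := by cases ν <;> simp_all
    simp [wordProd_nil]
  | cons a μ ih =>
    intro ν hν
    cases ν with
    | nil => simp at hν
    | cons b ν' =>
      simp only [List.length_cons, Nat.add_right_cancel_iff] at hν
      rw [wordProd_cons, wordProd_cons, star_mul, mul_assoc,
        ← mul_assoc (star (S a)), cuntz_orth S hS1 hS2 a b]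
      by_cases hab : a = b
      · subst hab
        rw [if_pos rfl, one_mul, ih ν' hν]
        by_cases hμν : μ = ν' <;> simp [hμν]
      · simp [hab, List.cons_eq_cons]

/-- the basic "matrix units" at level `r`, indexed by pairs of functions. -/
def eGen {A : Type*} [Ring A] [Algebra ℂ A] [StarRing A] {n : ℕ}
    (S : Fin n → A) (r : ℕ) (p : (Fin r → Fin n) × (Fin r → Fin n)) : A :=
  wordProd S (List.ofFn p.1) * star (wordProd S (List.ofFn p.2))

lemma exists_ofFn {α : Type*} (μ : List α) {r : ℕ} (h : μ.length = r) :
    ∃ f : Fin r → α, List.ofFn f = μ := by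
  subst h; exact ⟨μ.get, List.ofFn_get μ⟩

lemma Bspan_eq_range {A : Type*} [Ring A] [Algebra ℂ A] [StarRing A] {n : ℕ}
    (S : Fin n → A) (r : ℕ) :
    Bspan S r r = Submodule.span ℂ (Set.range (eGen S r)) := by
  apply le_antisymm
  · apply Submodule.span_le.2
    rintro a ⟨μ, ν, hμ, hν, rfl⟩
    obtain ⟨f, rfl⟩ := exists_ofFn μ hμ
    obtain ⟨g, rfl⟩ := exists_ofFn ν hν
    exact Submodule.subset_span ⟨(f, g), rfl⟩
  · apply Submodule.span_le.2
    rintro a ⟨p, rfl⟩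
    exact Submodule.subset_span ⟨List.ofFn p.1, List.ofFn p.2, by simp, by simp, rfl⟩

lemma Bspan_step {A : Type*} [Ring A] [Algebra ℂ A] [StarRing A] {n : ℕ}
    (S : Fin n → A) (hS2 : ∑ j, S j * star (S j) = 1) (r : ℕ) :
    Bspan S r r ≤ Bspan S (r + 1) (r + 1) := by
  apply Submodule.span_le.2
  rintro a ⟨μ, ν, hμ, hν, rfl⟩
  have key : wordProd S μ * star (wordProd S ν)
      = ∑ j, wordProd S (μ ++ [j]) * star (wordProd S (ν ++ [j])) := by
    have h1 : ∀ j : Fin n, wordProd S (μ ++ [j]) * star (wordProd S (ν ++ [j]))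
        = wordProd S μ * (S j * star (S j)) * star (wordProd S ν) := by
      intro j
      rw [wordProd_append, wordProd_append, star_mul]
      simp [wordProd, mul_assoc]
    simp only [h1]
    rw [← Finset.sum_mul, ← Finset.mul_sum, hS2, mul_one]
  rw [key]
  exact Submodule.sum_mem _ fun j _ => Submodule.subset_span
    ⟨μ ++ [j], ν ++ [j], by simp [hμ], by simp [hν], rfl⟩

lemma phi_eGen {A : Type*} [NormedRing A] [StarRing A] [CStarRing A]
    [NormedAlgebra ℂ A] [StarModule ℂ A] [CompleteSpace A]
    {n : ℕ} (S : Fin n → A)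
    (hS1 : ∀ i, star (S i) * S i = 1)
    (hS2 : ∑ j, S j * star (S j) = 1)
    (φ : A →L[ℂ] ℂ)
    (hφ : ∀ μ ν : List (Fin n),
      φ (wordProd S μ * star (wordProd S ν)) =
        if μ = ν then ((n : ℂ) ^ μ.length)⁻¹ else 0)
    (r : ℕ) (p q : (Fin r → Fin n) × (Fin r → Fin n)) :
    φ (star (eGen S r p) * eGen S r q) = if p = q then ((n : ℂ) ^ r)⁻¹ else 0 := by
  have hmid : star (eGen S r p) * eGen S r q
      = wordProd S (List.ofFn p.2) *
        (star (wordProd S (List.ofFn p.1)) * wordProd S (List.ofFn q.1)) *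
        star (wordProd S (List.ofFn q.2)) := by
    simp only [eGen, star_mul, star_star]
    rw [mul_assoc, mul_assoc, mul_assoc]
  rw [hmid, word_orth S hS1 hS2 _ _ (by simp)]
  by_cases h1 : p.1 = q.1
  · rw [if_pos (by rw [h1]), mul_one, hφ]
    simp only [List.length_ofFn]
    simp only [List.ofFn_inj]
    by_cases h2 : p.2 = q.2
    · rw [if_pos h2, if_pos (Prod.ext h1 h2)]
    · rw [if_neg h2, if_neg (fun h => h2 (by rw [h]))]
  · rw [if_neg (fun h => h1 (List.ofFn_inj.mp h)), mul_zero, zero_mul, map_zero,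
      if_neg (fun h => h1 (by rw [h]))]


/-- For every `k ≥ 1`, `F_k` is the φ-orthogonal internal direct sum of
`F_{k-1}` and `W_k`: `F_{k-1} ⊆ F_k`, every `x ∈ F_k` decomposes as `x = y + z` with
`y ∈ F_{k-1}`, `z ∈ W_k`, and `F_{k-1} ∩ W_k = {0}`. -/
theorem Fk_direct_sum_decomposition
    {A : Type*} [NormedRing A] [StarRing A] [CStarRing A]
    [NormedAlgebra ℂ A] [StarModule ℂ A] [CompleteSpace A]
    {n : ℕ} (hn : 2 ≤ n) (S : Fin n → A)
    (hS1 : ∀ i, star (S i) * S i = 1)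
    (hS2 : ∑ j, S j * star (S j) = 1)
    (φ : A →L[ℂ] ℂ)
    (hφ : ∀ μ ν : List (Fin n),
      φ (wordProd S μ * star (wordProd S ν)) =
        if μ = ν then ((n : ℂ) ^ μ.length)⁻¹ else 0)
    (k : ℕ) (hk : 1 ≤ k) :
    Bspan S (k - 1) (k - 1) ≤ Bspan S k k ∧
    (∀ x ∈ Bspan S k k,
        ∃ y ∈ Bspan S (k - 1) (k - 1), ∃ z ∈ Wsub φ S k, x = y + z) ∧
    Bspan S (k - 1) (k - 1) ⊓ Wsub φ S k = ⊥ := by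
  obtain ⟨r, rfl⟩ : ∃ r, k = r + 1 := ⟨k - 1, (Nat.succ_pred_eq_of_pos hk).symm⟩
  simp only [Nat.add_sub_cancel]
  have hn0 : ((n : ℂ) ^ r) ≠ 0 := by
    apply pow_ne_zero
    exact_mod_cast (by omega : n ≠ 0)
  have hE := phi_eGen S hS1 hS2 φ hφ r
  have hWsub : Wsub φ S (r + 1) = Bspan S (r + 1) (r + 1) ⊓
      ⨅ y ∈ Bspan S r r,
        LinearMap.ker ((φ : A →ₗ[ℂ] ℂ) ∘ₗ LinearMap.mulLeft ℂ (star y)) := rfl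
  have hEmem : ∀ p, eGen S r p ∈ Bspan S r r := fun p =>
    Submodule.subset_span ⟨List.ofFn p.1, List.ofFn p.2, by simp, by simp, rfl⟩
  refine ⟨Bspan_step S hS2 r, ?_, ?_⟩
  · -- decomposition
    intro x hx
    set P : A := ∑ p, ((n : ℂ) ^ r * φ (star (eGen S r p) * x)) • eGen S r p with hP
    have hPmem : P ∈ Bspan S r r :=
      Submodule.sum_mem _ fun p _ => Submodule.smul_mem _ _ (hEmem p)
    have hkey : ∀ q, φ (star (eGen S r q) * (x - P)) = 0 := by
      intro q
      have expand : star (eGen S r q) * (x - P)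
          = star (eGen S r q) * x
            - ∑ p, ((n : ℂ) ^ r * φ (star (eGen S r p) * x)) •
                (star (eGen S r q) * eGen S r p) := by
        rw [mul_sub, hP, Finset.mul_sum]
        congr 1
        exact Finset.sum_congr rfl fun p _ => by rw [mul_smul_comm]
      rw [expand, map_sub, map_sum]
      simp only [map_smul, smul_eq_mul, hE]
      rw [Finset.sum_congr rfl (fun p _ => mul_ite _ _ _ _)]
      simp only [mul_zero]
      rw [Finset.sum_ite_eq Finset.univ q
        (fun p => (n : ℂ) ^ r * φ (star (eGen S r p) * x) * ((n : ℂ) ^ r)⁻¹)]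
      simp only [Finset.mem_univ, if_true]
      field_simp
      simp
    have hzW : x - P ∈ Wsub φ S (r + 1) := by
      rw [hWsub, Submodule.mem_inf]
      constructor
      · exact sub_mem hx (Bspan_step S hS2 r hPmem)
      · rw [Submodule.mem_iInf]
        intro y
        rw [Submodule.mem_iInf]
        intro hy
        rw [LinearMap.mem_ker]
        show φ (star y * (x - P)) = 0
        rw [Bspan_eq_range] at hy
        induction hy using Submodule.span_induction with
        | mem y hy => obtain ⟨p, rfl⟩ := hy; exact hkey p
        | zero => simp
        | add y z _ _ hy hz => rw [star_add, add_mul, map_add, hy, hz, add_zero]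
        | smul c y _ h => rw [star_smul, smul_mul_assoc, map_smul, h, smul_zero]
    exact ⟨P, hPmem, x - P, hzW, by abel⟩
  · -- trivial intersection
    rw [eq_bot_iff]
    rintro y hy
    rw [Submodule.mem_inf] at hy
    obtain ⟨hy1, hy2⟩ := hy
    rw [hWsub, Submodule.mem_inf] at hy2
    have hker := (Submodule.mem_iInf _).1 ((Submodule.mem_iInf _).1 hy2.2 y) hy1
    rw [LinearMap.mem_ker] at hker
    have hzero : φ (star y * y) = 0 := hker
    rw [Bspan_eq_range] at hy1
    obtain ⟨c, hc⟩ := (Submodule.mem_span_range_iff_exists_fun ℂ).1 hy1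
    have hexp : φ (star y * y)
        = ∑ p, ∑ q, ((starRingEnd ℂ) (c p) * c q) * φ (star (eGen S r p) * eGen S r q) := by
      rw [← hc, star_sum]
      simp only [star_smul, starRingEnd_apply]
      rw [Finset.sum_mul_sum]
      rw [map_sum]
      apply Finset.sum_congr rfl
      intro p _
      rw [map_sum]
      apply Finset.sum_congr rfl
      intro q _
      rw [smul_mul_smul_comm, map_smul, smul_eq_mul]
    rw [hexp] at hzero
    simp only [hE, mul_ite, mul_zero] at hzero
    rw [Finset.sum_congr rfl (fun p _ => Finset.sum_ite_eq Finset.univ p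
      (fun q => (starRingEnd ℂ) (c p) * c q * ((n : ℂ) ^ r)⁻¹))] at hzero
    simp only [Finset.mem_univ, if_true] at hzero
    have hsum : ∑ p, (Complex.normSq (c p) : ℂ) = 0 := by
      have : ∑ p, ((starRingEnd ℂ) (c p) * c p * ((n : ℂ) ^ r)⁻¹)
          = (∑ p, (Complex.normSq (c p) : ℂ)) * ((n : ℂ) ^ r)⁻¹ := by
        rw [Finset.sum_mul]
        apply Finset.sum_congr rfl
        intro p _
        rw [← Complex.normSq_eq_conj_mul_self]
      rw [this] at hzero
      exact (mul_eq_zero.1 hzero).resolve_right (inv_ne_zero hn0)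
    have hreal : ∑ p, Complex.normSq (c p) = 0 := by
      exact_mod_cast hsum.symm ▸ (by push_cast; rfl : ((∑ p, Complex.normSq (c p) : ℝ) : ℂ) = ∑ p, (Complex.normSq (c p) : ℂ))
    have hc0 : ∀ p ∈ Finset.univ, Complex.normSq (c p) = 0 :=
      (Finset.sum_eq_zero_iff_of_nonneg (fun p _ => Complex.normSq_nonneg _)).1 hreal
    have : y = 0 := by
      rw [← hc]
      apply Finset.sum_eq_zero
      intro p _
      rw [Complex.normSq_eq_zero.1 (hc0 p (Finset.mem_univ p)), zero_smul]
    simp [this]
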